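/- Let n ≥ 4 be even and let A ⊆ B be simple graphs without cycles of length at most n, with A closed in B (every path of length at most n/2 in B between two vertices of A lies in A). Identify P(A) with the subgraph of P(B) consisting of A together with the new formal paths between pairs of vertices of A. Then P(A) is closed in P(B): every path of length at most n/2 in P(B) between two vertices of P(A) lies entirely in P(A). -/

import Mathlib

/-- If `A` is closed in `B`, then `P(A)` (identified with the subgraph of `P(B)`
consisting of `A` together with the formal paths between vertices of `A`) is
closed in `P(B)`. -/
theorem P_closed {V ι : Type*} (G : SimpleGraph V) (n m : ℕ)
    (hn : 4 ≤ n) (hnm : n = 2 * m)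
    (hcyc : ∀ (v : V) (c : G.Walk v v), c.IsCycle → n < c.length)
    (e : ι → V × V)
    (hne : ∀ i, (e i).1 ≠ (e i).2)
    (hfar : ∀ i, ¬ ∃ p : G.Walk (e i).1 (e i).2, p.IsPath ∧ p.length ≤ m)
    (hinj : ∀ i j, (e i = e j ∨ e i = ((e j).2, (e j).1)) → i = j)
    (hsurj : ∀ a b : V, a ≠ b →
      (¬ ∃ p : G.Walk a b, p.IsPath ∧ p.length ≤ m) →
      ∃ i, e i = (a, b) ∨ e i = (b, a))
    (G' : SimpleGraph (V ⊕ ι × Fin (m - 1)))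
    (hGinl : ∀ a b : V, G'.Adj (Sum.inl a) (Sum.inl b) ↔ G.Adj a b)
    (hGcross : ∀ (a : V) (i : ι) (k : Fin (m - 1)),
      G'.Adj (Sum.inl a) (Sum.inr (i, k)) ↔
        ((k : ℕ) = 0 ∧ a = (e i).1) ∨ ((k : ℕ) = m - 2 ∧ a = (e i).2))
    (hGinr : ∀ (i j : ι) (k l : Fin (m - 1)),
      G'.Adj (Sum.inr (i, k)) (Sum.inr (j, l)) ↔
        (i = j ∧ ((k : ℕ) + 1 = l ∨ (l : ℕ) + 1 = k)))
    (A : Set V)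
    (hclosed : ∀ (u v : V), u ∈ A → v ∈ A → ∀ p : G.Walk u v,
      p.IsPath → p.length ≤ m → ∀ x ∈ p.support, x ∈ A)
    (S : Set (V ⊕ ι × Fin (m - 1)))
    (hS : S = {z | (∃ x ∈ A, z = Sum.inl x) ∨
      (∃ (i : ι) (k : Fin (m - 1)),
        z = Sum.inr (i, k) ∧ (e i).1 ∈ A ∧ (e i).2 ∈ A)}) :
    ∀ (u v : V ⊕ ι × Fin (m - 1)), u ∈ S → v ∈ S → ∀ p : G'.Walk u v,
      p.IsPath → p.length ≤ m → ∀ x ∈ p.support, x ∈ S := by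
  classical
  have hm : 2 ≤ m := by omega
  -- membership facts about S
  have hSinl : ∀ a : V, a ∈ A → Sum.inl a ∈ S := by
    intro a ha; rw [hS]; exact Or.inl ⟨a, ha, rfl⟩
  have hSinl' : ∀ a : V, Sum.inl a ∈ S → a ∈ A := by
    intro a ha; rw [hS] at ha
    rcases ha with ⟨x, hx, hax⟩ | ⟨i, k, hik, _⟩
    · cases hax; exact hx
    · exact absurd hik (by simp)
  have hSinr : ∀ (i : ι) (k : Fin (m - 1)), (e i).1 ∈ A → (e i).2 ∈ A →
      Sum.inr (i, k) ∈ S := by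
    intro i k h1 h2; rw [hS]; exact Or.inr ⟨i, k, rfl, h1, h2⟩
  have hSinr' : ∀ (i : ι) (k : Fin (m - 1)), Sum.inr (i, k) ∈ S →
      (e i).1 ∈ A ∧ (e i).2 ∈ A := by
    intro i k h; rw [hS] at h
    rcases h with ⟨x, _, hx⟩ | ⟨i', k', hik, h1, h2⟩
    · exact absurd hx (by simp)
    · obtain ⟨rfl, rfl⟩ : i' = i ∧ k' = k := by
        have := hik.symm; simp only [Sum.inr.injEq, Prod.mk.injEq] at this
        exact this
      exact ⟨h1, h2⟩
  -- neighbors of an internal chain vertex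
  have hnbr : ∀ (i : ι) (k : Fin (m - 1)) (z : V ⊕ ι × Fin (m - 1)),
      G'.Adj (Sum.inr (i, k)) z →
      (z = Sum.inl (e i).1 ∧ (k : ℕ) = 0) ∨
      (z = Sum.inl (e i).2 ∧ (k : ℕ) = m - 2) ∨
      (∃ l : Fin (m - 1), z = Sum.inr (i, l) ∧
        ((k : ℕ) + 1 = l ∨ (l : ℕ) + 1 = k)) := by
    intro i k z hadj
    match z with
    | Sum.inl c =>
      rcases (hGcross c i k).mp hadj.symm with ⟨h1, h2⟩ | ⟨h1, h2⟩
      · exact Or.inl ⟨by rw [h2], h1⟩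
      · exact Or.inr (Or.inl ⟨by rw [h2], h1⟩)
    | Sum.inr (j, l) =>
      obtain ⟨rfl, h2⟩ := (hGinr i j k l).mp hadj
      exact Or.inr (Or.inr ⟨l, rfl, h2⟩)
  -- structure of a walk starting at an internal chain vertex
  have chainStart : ∀ (u v : V ⊕ ι × Fin (m - 1)) (p : G'.Walk u v)
      (i : ι) (k : Fin (m - 1)), u = Sum.inr (i, k) →
      (∀ x ∈ p.support, ∃ l, x = Sum.inr (i, l)) ∨
      ∃ (c : V) (l : Fin (m - 1)) (q : G'.Walk u (Sum.inl c))
        (r : G'.Walk (Sum.inl c) v),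
        p = q.append r ∧
        (((l : ℕ) = 0 ∧ c = (e i).1) ∨ ((l : ℕ) = m - 2 ∧ c = (e i).2)) ∧
        (∀ x ∈ q.support, x = Sum.inl c ∨ ∃ l', x = Sum.inr (i, l')) ∧
        (k : ℕ) + 1 ≤ (l : ℕ) + q.length ∧
        (l : ℕ) + 1 ≤ (k : ℕ) + q.length := by
    intro u v p
    induction p with
    | nil =>
      intro i k hu; left; intro x hx
      simp only [SimpleGraph.Walk.support_nil, List.mem_singleton] at hx
      subst hx; exact ⟨k, hu⟩
    | @cons a b c hadj q ih =>
      intro i k hu; subst hu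
      rcases hnbr i k b hadj with ⟨hb, hk⟩ | ⟨hb, hk⟩ | ⟨l', hb, hl'⟩
      · subst hb
        right
        refine ⟨(e i).1, k, SimpleGraph.Walk.cons hadj SimpleGraph.Walk.nil, q,
          by simp, Or.inl ⟨hk, rfl⟩, ?_, by simp, by simp⟩
        intro x hx
        simp only [SimpleGraph.Walk.support_cons, SimpleGraph.Walk.support_nil,
          List.mem_cons, List.mem_singleton] at hx
        rcases hx with rfl | rfl | h
        · exact Or.inr ⟨k, rfl⟩
        · exact Or.inl rfl
        · exact absurd h List.not_mem_nil
      · subst hb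
        right
        refine ⟨(e i).2, k, SimpleGraph.Walk.cons hadj SimpleGraph.Walk.nil, q,
          by simp, Or.inr ⟨hk, rfl⟩, ?_, by simp, by simp⟩
        intro x hx
        simp only [SimpleGraph.Walk.support_cons, SimpleGraph.Walk.support_nil,
          List.mem_cons, List.mem_singleton] at hx
        rcases hx with rfl | rfl | h
        · exact Or.inr ⟨k, rfl⟩
        · exact Or.inl rfl
        · exact absurd h List.not_mem_nil
      · subst hb
        rcases ih i l' rfl with hall | ⟨c', l, q1, r, hdec, hside, hsup, hb1, hb2⟩
        · left
          intro x hx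
          simp only [SimpleGraph.Walk.support_cons, List.mem_cons] at hx
          rcases hx with rfl | hx
          · exact ⟨k, rfl⟩
          · exact hall x hx
        · right
          refine ⟨c', l, SimpleGraph.Walk.cons hadj q1, r, by rw [hdec]; rfl,
            hside, ?_, ?_, ?_⟩
          · intro x hx
            simp only [SimpleGraph.Walk.support_cons, List.mem_cons] at hx
            rcases hx with rfl | hx
            · exact Or.inr ⟨k, rfl⟩
            · exact hsup x hx
          · simp only [SimpleGraph.Walk.length_cons]; omega
          · simp only [SimpleGraph.Walk.length_cons]; omega
  -- lifting of all-inl walks to G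
  have inlLift : ∀ (u v : V ⊕ ι × Fin (m - 1)) (p : G'.Walk u v) (a b : V),
      u = Sum.inl a → v = Sum.inl b →
      (∀ x ∈ p.support, ∃ c, x = Sum.inl c) →
      ∃ q : G.Walk a b, q.length = p.length ∧
        p.support = q.support.map Sum.inl := by
    intro u v p
    induction p with
    | nil =>
      intro a b hu hv _
      subst hu
      obtain rfl : a = b := Sum.inl.inj hv
      exact ⟨SimpleGraph.Walk.nil, by simp, by simp⟩
    | @cons w z v hadj q ih =>
      intro a b hu hv hall
      subst hu
      obtain ⟨c, rfl⟩ : ∃ c, z = Sum.inl c := by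
        apply hall
        simp only [SimpleGraph.Walk.support_cons, List.mem_cons]
        exact Or.inr q.start_mem_support
      obtain ⟨q', hq1, hq2⟩ := ih c b rfl hv (fun x hx => hall x (by
        simp only [SimpleGraph.Walk.support_cons, List.mem_cons]; exact Or.inr hx))
      exact ⟨SimpleGraph.Walk.cons ((hGinl a c).mp hadj) q', by simp [hq1],
        by simp [hq2]⟩
  -- main claim by strong induction on length
  have main : ∀ (L : ℕ) (u v : V ⊕ ι × Fin (m - 1)), u ∈ S → v ∈ S →
      ∀ p : G'.Walk u v, p.IsPath → p.length ≤ m → p.length ≤ L →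
      ∀ x ∈ p.support, x ∈ S := by
    intro L
    induction L with
    | zero =>
      intro u v hu hv p hp hpm hp0 x hx
      cases p with
      | nil =>
        simp only [SimpleGraph.Walk.support_nil, List.mem_singleton] at hx
        subst hx; exact hu
      | cons h q => simp [SimpleGraph.Walk.length_cons] at hp0
    | succ L ih =>
      intro u v hu hv p hp hpm hpL x hx
      cases u with
      | inr ik =>
        obtain ⟨i, k⟩ := ik
        obtain ⟨hA1, hA2⟩ := hSinr' i k hu
        rcases chainStart _ v p i k rfl with hall | ⟨c, l, q, r, hdec, hside, hsup, hb1, hb2⟩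
        · obtain ⟨l', rfl⟩ := hall x hx
          exact hSinr i l' hA1 hA2
        · have hcA : c ∈ A := by
            rcases hside with ⟨_, rfl⟩ | ⟨_, rfl⟩
            · exact hA1
            · exact hA2
          have hlen : p.length = q.length + r.length := by
            rw [hdec, SimpleGraph.Walk.length_append]
          have hq1 : 1 ≤ q.length := by omega
          have hr : r.IsPath := by
            rw [hdec] at hp; exact hp.of_append_right
          have hxS := ih (Sum.inl c) v (hSinl c hcA) hv r hr (by omega) (by omega)
          rw [hdec, SimpleGraph.Walk.mem_support_append_iff] at hx
          rcases hx with hx | hx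
          · rcases hsup x hx with rfl | ⟨l', rfl⟩
            · exact hSinl c hcA
            · exact hSinr i l' hA1 hA2
          · exact hxS x hx
      | inl a =>
        have ha : a ∈ A := hSinl' a hu
        cases v with
        | inr jk =>
          obtain ⟨j, k'⟩ := jk
          obtain ⟨hB1, hB2⟩ := hSinr' j k' hv
          rcases chainStart _ _ p.reverse j k' rfl with hall | ⟨c, l, q, r, hdec, hside, hsup, hb1, hb2⟩
          · exfalso
            have hmem : Sum.inl a ∈ p.reverse.support := by
              rw [SimpleGraph.Walk.support_reverse, List.mem_reverse]
              exact p.start_mem_support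
            obtain ⟨l', hl'⟩ := hall _ hmem
            exact absurd hl' (by simp)
          · have hcA : c ∈ A := by
              rcases hside with ⟨_, rfl⟩ | ⟨_, rfl⟩
              · exact hB1
              · exact hB2
            have hlen : p.length = q.length + r.length := by
              have := congrArg SimpleGraph.Walk.length hdec
              rwa [SimpleGraph.Walk.length_reverse,
                SimpleGraph.Walk.length_append] at this
            have hq1 : 1 ≤ q.length := by omega
            have hr : r.IsPath := by
              have := hp.reverse
              rw [hdec] at this; exact this.of_append_right
            have hxS := ih (Sum.inl c) (Sum.inl a) (hSinl c hcA) hu r hr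
              (by omega) (by omega)
            have hx' : x ∈ p.reverse.support := by
              rw [SimpleGraph.Walk.support_reverse, List.mem_reverse]; exact hx
            rw [hdec, SimpleGraph.Walk.mem_support_append_iff] at hx'
            rcases hx' with hx' | hx'
            · rcases hsup x hx' with rfl | ⟨l', rfl⟩
              · exact hSinl c hcA
              · exact hSinr j l' hB1 hB2
            · exact hxS x hx'
        | inl b =>
          have hb : b ∈ A := hSinl' b hv
          rcases Classical.em (∀ y ∈ p.support, ∃ c, y = Sum.inl c) with hall | hall
          · obtain ⟨q, hq1, hq2⟩ := inlLift _ _ p a b rfl rfl hall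
            have hqpath : q.IsPath := by
              rw [SimpleGraph.Walk.isPath_def]
              have := hp.support_nodup
              rw [hq2] at this
              exact this.of_map _
            have hAq := hclosed a b ha hb q hqpath (by omega)
            rw [hq2] at hx
            obtain ⟨c, hc, rfl⟩ := List.mem_map.mp hx
            exact hSinl c (hAq c hc)
          · push_neg at hall
            obtain ⟨y, hy, hyn⟩ := hall
            obtain ⟨⟨i, k⟩, rfl⟩ : ∃ ik : ι × Fin (m - 1), y = Sum.inr ik := by
              cases y with
              | inl c => exact absurd rfl (hyn c)
              | inr ik => exact ⟨ik, rfl⟩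
            set p1 := p.takeUntil _ hy with hp1def
            set p2 := p.dropUntil _ hy with hp2def
            have hspec : p1.append p2 = p := p.take_spec hy
            -- chain structure before and after the internal vertex
            rcases chainStart _ _ p1.reverse i k rfl with hall1 | ⟨c1, l1, q1, r1, hdec1, hside1, hsup1, h11, h12⟩
            · exfalso
              have hmem : Sum.inl a ∈ p1.reverse.support := by
                rw [SimpleGraph.Walk.support_reverse, List.mem_reverse]
                exact p1.start_mem_support
              obtain ⟨l', hl'⟩ := hall1 _ hmem
              exact absurd hl' (by simp)
            rcases chainStart _ _ p2 i k rfl with hall2 | ⟨c2, l2, q2, r2, hdec2, hside2, hsup2, h21, h22⟩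
            · exfalso
              obtain ⟨l', hl'⟩ := hall2 _ p2.end_mem_support
              exact absurd hl' (by simp)
            -- c1 ≠ c2 by nodup of p's support
            have hm1 : Sum.inl c1 ∈ p1.support := by
              have : Sum.inl c1 ∈ p1.reverse.support := by
                rw [hdec1, SimpleGraph.Walk.mem_support_append_iff]
                exact Or.inl q1.end_mem_support
              rwa [SimpleGraph.Walk.support_reverse, List.mem_reverse] at this
            have hm2 : Sum.inl c2 ∈ p2.support.tail := by
              have h2 : Sum.inl c2 ∈ p2.support := by
                rw [hdec2, SimpleGraph.Walk.mem_support_append_iff]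
                exact Or.inl q2.end_mem_support
              rw [p2.support_eq_cons, List.mem_cons] at h2
              rcases h2 with h2 | h2
              · exact absurd h2 (by simp)
              · exact h2
            have hnd : (p1.support ++ p2.support.tail).Nodup := by
              have := hp.support_nodup
              rwa [← hspec, SimpleGraph.Walk.support_append] at this
            have hcc : c1 ≠ c2 := by
              intro h
              exact (List.disjoint_of_nodup_append hnd) hm1 (h ▸ hm2)
            -- lengths
            have hlen1 : p1.length = q1.length + r1.length := by
              have := congrArg SimpleGraph.Walk.length hdec1
              rwa [SimpleGraph.Walk.length_reverse,
                SimpleGraph.Walk.length_append] at this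
            have hlen2 : p2.length = q2.length + r2.length := by
              have := congrArg SimpleGraph.Walk.length hdec2
              rwa [SimpleGraph.Walk.length_append] at this
            have hlenp : p.length = p1.length + p2.length := by
              rw [← hspec, SimpleGraph.Walk.length_append]
            have hkm : (k : ℕ) < m - 1 := k.isLt
            -- get the sum bound from the two sides
            have hsum : m ≤ q1.length + q2.length ∧ (e i).1 ∈ A ∧ (e i).2 ∈ A ∧
                c1 ∈ A ∧ c2 ∈ A := by
              have hr10 : r1.length = 0 → c1 = a := fun h0 =>
                Sum.inl.inj (SimpleGraph.Walk.eq_of_length_eq_zero h0)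
              have hr20 : r2.length = 0 → c2 = b := fun h0 =>
                Sum.inl.inj (SimpleGraph.Walk.eq_of_length_eq_zero h0)
              rcases hside1 with ⟨hl1, hc1⟩ | ⟨hl1, hc1⟩ <;>
                rcases hside2 with ⟨hl2, hc2⟩ | ⟨hl2, hc2⟩
              · exact absurd (hc1.trans hc2.symm) hcc
              · have hq : m ≤ q1.length + q2.length := by omega
                have hc1a : c1 = a := hr10 (by omega)
                have hc2b : c2 = b := hr20 (by omega)
                refine ⟨hq, ?_, ?_, ?_, ?_⟩
                · rw [← hc1, hc1a]; exact ha
                · rw [← hc2, hc2b]; exact hb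
                · rw [hc1a]; exact ha
                · rw [hc2b]; exact hb
              · have hq : m ≤ q1.length + q2.length := by omega
                have hc1a : c1 = a := hr10 (by omega)
                have hc2b : c2 = b := hr20 (by omega)
                refine ⟨hq, ?_, ?_, ?_, ?_⟩
                · rw [← hc2, hc2b]; exact hb
                · rw [← hc1, hc1a]; exact ha
                · rw [hc1a]; exact ha
                · rw [hc2b]; exact hb
              · exact absurd (hc1.trans hc2.symm) hcc
            obtain ⟨hq12, hiA, hiB, hc1A, hc2A⟩ := hsum
            have hr10 : r1.length = 0 := by omega
            have hr20 : r2.length = 0 := by omega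
            -- finish: every vertex of p is in S
            rw [← hspec, SimpleGraph.Walk.mem_support_append_iff] at hx
            have hr1sup : r1.support = [Sum.inl c1] := by
              have h1 : r1.support.length = 1 := by
                rw [SimpleGraph.Walk.length_support, hr10]
              obtain ⟨z, hz⟩ := List.length_eq_one_iff.mp h1
              have := r1.start_mem_support
              rw [hz, List.mem_singleton] at this
              rw [hz, this]
            have hr2sup : r2.support = [Sum.inl c2] := by
              have h1 : r2.support.length = 1 := by
                rw [SimpleGraph.Walk.length_support, hr20]
              obtain ⟨z, hz⟩ := List.length_eq_one_iff.mp h1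
              have := r2.start_mem_support
              rw [hz, List.mem_singleton] at this
              rw [hz, this]
            rcases hx with hx | hx
            · have hx' : x ∈ p1.reverse.support := by
                rw [SimpleGraph.Walk.support_reverse, List.mem_reverse]; exact hx
              rw [hdec1, SimpleGraph.Walk.mem_support_append_iff] at hx'
              rcases hx' with hx' | hx'
              · rcases hsup1 x hx' with rfl | ⟨l', rfl⟩
                · exact hSinl c1 hc1A
                · exact hSinr i l' hiA hiB
              · rw [hr1sup, List.mem_singleton] at hx'
                subst hx'; exact hSinl c1 hc1A
            · rw [hdec2, SimpleGraph.Walk.mem_support_append_iff] at hx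
              rcases hx with hx | hx
              · rcases hsup2 x hx with rfl | ⟨l', rfl⟩
                · exact hSinl c2 hc2A
                · exact hSinr i l' hiA hiB
              · rw [hr2sup, List.mem_singleton] at hx
                subst hx; exact hSinl c2 hc2A
  intro u v hu hv p hp hpm x hx
  exact main p.length u v hu hv p hp hpm le_rfl x hx
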